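/- Let Λ be a finitely aligned rank-r graph which is nontrivial, i.e. there exists λ ∈ Λ with d(λ) ≠ 0. Then there exist a, b ∈ Λ⁰, characters f_a and f_b of A_Λ with f_a(L_a) = 1, f_a(L_λ) = 0 for λ ≠ a, f_b(L_b) = 1, f_b(L_λ) = 0 for λ ≠ b, and a bounded linear functional δ : A_Λ → ℂ satisfying δ(xy) = f_a(x)δ(y) + δ(x)f_b(y) for all x, y ∈ A_Λ, such that δ is not inner: there is no c ∈ ℂ with δ(x) = f_a(x)·c − c·f_b(x) for all x ∈ A_Λ. (In particular the first bounded Hochschild cohomology of A_Λ with coefficients in the bimodule ℂ_{a,b} is nonzero, so A_Λ is not amenable.) -/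

import Mathlib

open scoped ComplexOrder
open ContinuousLinearMap

set_option synthInstance.maxHeartbeats 4000000
set_option maxHeartbeats 4000000

noncomputable section

universe u

/-- A rank-`r` graph: a countable small category whose morphisms form `Λ`, objects being
identified with degree-zero morphisms, equipped with a degree functor into `ℕ^r`
satisfying the unique factorisation property. -/
structure KGraph (r : ℕ) where
  Λ : Type
  countable : Countable Λ
  src : Λ → Λ
  tgt : Λ → Λ
  deg : Λ → Fin r → ℕ
  comp : Λ → Λ → Λ
  deg_src : ∀ l, deg (src l) = 0
  deg_tgt : ∀ l, deg (tgt l) = 0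
  src_eq_self : ∀ l, deg l = 0 → src l = l
  tgt_eq_self : ∀ l, deg l = 0 → tgt l = l
  comp_src_self : ∀ l, comp l (src l) = l
  tgt_comp_self : ∀ l, comp (tgt l) l = l
  src_comp : ∀ l m, src l = tgt m → src (comp l m) = src m
  tgt_comp : ∀ l m, src l = tgt m → tgt (comp l m) = tgt l
  deg_comp : ∀ l m, src l = tgt m → deg (comp l m) = deg l + deg m
  comp_assoc : ∀ l m n, src l = tgt m → src m = tgt n →
    comp (comp l m) n = comp l (comp m n)
  factorisation : ∀ (l : Λ) (m n : Fin r → ℕ), deg l = m + n →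
    ∃! p : Λ × Λ, deg p.1 = m ∧ deg p.2 = n ∧ src p.1 = tgt p.2 ∧ comp p.1 p.2 = l

namespace KGraph

variable {r : ℕ} (K : KGraph r)

/-- `|λ|`, the total degree of a morphism. -/
def degSum (l : K.Λ) : ℕ := ∑ j, K.deg l j

/-- The vertices `Λ⁰`, i.e. the degree-zero morphisms. -/
def IsVertex (l : K.Λ) : Prop := K.deg l = 0

/-- The pairs `(α, β)` describing the elements `μα = νβ` of `MCE(μ, ν)`. -/
def MCEPair (μ ν : K.Λ) (p : K.Λ × K.Λ) : Prop :=
  K.src μ = K.tgt p.1 ∧ K.src ν = K.tgt p.2 ∧ K.comp μ p.1 = K.comp ν p.2 ∧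
    K.deg (K.comp μ p.1) = K.deg μ ⊔ K.deg ν

/-- `Λ` is finitely aligned. -/
def FinitelyAligned : Prop := ∀ μ ν : K.Λ, {p : K.Λ × K.Λ | K.MCEPair μ ν p}.Finite

/-- `Λ` is row-finite. -/
def RowFinite : Prop :=
  ∀ (n : Fin r → ℕ) (a : K.Λ), {l : K.Λ | K.deg l = n ∧ K.tgt l = a}.Finite

/-- `Λ` is a finite graph: each `Λ^n` is finite. -/
def FiniteGraph : Prop := ∀ n : Fin r → ℕ, {l : K.Λ | K.deg l = n}.Finite

/-- `Λ` has no sources. -/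
def NoSources : Prop :=
  ∀ a : K.Λ, K.IsVertex a → ∀ n : Fin r → ℕ, ∃ l, K.deg l = n ∧ K.tgt l = a

/-- `Λ` is cofinal. -/
def Cofinal : Prop := ∀ a : K.Λ, K.IsVertex a → ∃ l, K.deg l ≠ 0 ∧ K.tgt l = a

end KGraph

section Families

variable {r : ℕ} (K : KGraph r)
variable {H : Type u} [NormedAddCommGroup H] [InnerProductSpace ℂ H] [CompleteSpace H]

/-- A `Λ`-contraction on a Hilbert space `H`. -/
def IsLambdaContraction (V : K.Λ → H →L[ℂ] H) : Prop :=
  (∀ l m, K.src l ≠ K.tgt m → V l ∘L V m = 0) ∧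
  (∀ l m, K.src l = K.tgt m → V l ∘L V m = V (K.comp l m)) ∧
  (∀ (n : Fin r → ℕ) (F : Finset K.Λ), (∀ l ∈ F, K.deg l = n) →
    ((1 : H →L[ℂ] H) - ∑ l ∈ F, V l ∘L adjoint (V l)).IsPositive) ∧
  (∀ a, K.IsVertex a → IsSelfAdjoint (V a) ∧ V a ∘L V a = V a) ∧
  (∀ ξ : H, HasSum (fun a : {a : K.Λ // K.IsVertex a} => V a.1 ξ) ξ)

/-- A `Λ`-isometry on a Hilbert space `H`. -/
def IsLambdaIsometry (V : K.Λ → H →L[ℂ] H) : Prop :=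
  IsLambdaContraction K V ∧
  ∀ (n : Fin r → ℕ) (ξ : H),
    HasSum (fun l : {l : K.Λ // K.deg l = n} => V l.1 (adjoint (V l.1) ξ)) ξ

/-- `D` is the defect operator `Δ_s(V)` (a strong-operator-topology sum). -/
def IsDefectOperator (V : K.Λ → H →L[ℂ] H) (s : ℝ) (D : H →L[ℂ] H) : Prop :=
  ∀ ξ : H, HasSum
    (fun m : {m : K.Λ // K.deg m ≤ 1} =>
      (((-(s ^ 2)) ^ K.degSum m.1 : ℝ) : ℂ) • V m.1 (adjoint (V m.1) ξ)) (D ξ)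

/-- The Popescu condition for a `Λ`-contraction. -/
def PopescuCondition (V : K.Λ → H →L[ℂ] H) : Prop :=
  ∃ ρ ∈ Set.Ioo (0 : ℝ) 1, ∀ s ∈ Set.Ioo ρ 1,
    ∃ D : H →L[ℂ] H, IsDefectOperator K V s D ∧ D.IsPositive

/-- A Toeplitz-Cuntz-Krieger `Λ`-family. -/
def IsTCKFamily (W : K.Λ → H →L[ℂ] H) : Prop :=
  (∀ l, W l ∘L adjoint (W l) ∘L W l = W l) ∧
  (∀ a, K.IsVertex a → IsSelfAdjoint (W a) ∧ W a ∘L W a = W a) ∧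
  (∀ a b, K.IsVertex a → K.IsVertex b → a ≠ b → W a ∘L W b = 0) ∧
  (∀ l m, K.src l = K.tgt m → W l ∘L W m = W (K.comp l m)) ∧
  (∀ l, adjoint (W l) ∘L W l = W (K.src l)) ∧
  (∀ n : Fin r → ℕ, n ≠ 0 → ∀ a, K.IsVertex a → ∀ F : Finset K.Λ,
    (∀ l ∈ F, K.deg l = n ∧ K.tgt l = a) →
    (W a - ∑ l ∈ F, W l ∘L adjoint (W l)).IsPositive) ∧
  (∀ μ ν : K.Λ, ∀ ξ : H,
    HasSum (fun p : {p : K.Λ × K.Λ // K.MCEPair μ ν p} => W p.1.1 (adjoint (W p.1.2) ξ))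
      (adjoint (W μ) (W ν ξ)))

/-- A Cuntz-Pimsner `Λ`-family. -/
def IsCPFamily (W : K.Λ → H →L[ℂ] H) : Prop :=
  IsTCKFamily K W ∧
  ∀ n : Fin r → ℕ, n ≠ 0 → ∀ a, K.IsVertex a → ∀ ξ : H,
    HasSum (fun l : {l : K.Λ // K.deg l = n ∧ K.tgt l = a} => W l.1 (adjoint (W l.1) ξ))
      (W a ξ)

end Families

section Creation

variable {r : ℕ}

/-- The Fock space `ℓ²(Λ)` of a higher-rank graph. -/
abbrev FockSpace (K : KGraph r) : Type := lp (fun _ : K.Λ => ℂ) 2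

/-- `L` is the family of creation operators on `ℓ²(Λ)`:
`L_λ δ_μ = δ_{λμ}` if `s(λ) = r(μ)` and `L_λ δ_μ = 0` otherwise. -/
def IsCreationFamily (K : KGraph r) [DecidableEq K.Λ]
    (L : K.Λ → FockSpace K →L[ℂ] FockSpace K) : Prop :=
  ∀ l m : K.Λ,
    (K.src l = K.tgt m → L l (lp.single 2 m 1) = lp.single 2 (K.comp l m) 1) ∧
    (K.src l ≠ K.tgt m → L l (lp.single 2 m 1) = 0)

end Creation

/-- The noncommutative disc algebra `A_Λ`: the norm-closed unital subalgebra of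
`B(ℓ²(Λ))` generated by `I` and the creation operators. -/
def DiscAlgebra {r : ℕ} (K : KGraph r)
    (L : K.Λ → FockSpace K →L[ℂ] FockSpace K) :
    Subalgebra ℂ (FockSpace K →L[ℂ] FockSpace K) :=
  (Algebra.adjoin ℂ (Set.range L)).topologicalClosure
namespace DiscAlgebraNotAmenableProof

variable {r : ℕ} (K : KGraph r)

/-- Coordinate evaluation on the Fock space as a continuous linear functional. -/
def ev (i : K.Λ) : FockSpace K →L[ℂ] ℂ :=
  LinearMap.mkContinuous
    { toFun := fun ξ => ξ i
      map_add' := fun ξ η => by simp [lp.coeFn_add]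
      map_smul' := fun c ξ => by simp [lp.coeFn_smul] }
    1 (fun ξ => by rw [one_mul]; exact lp.norm_apply_le_norm (p := 2) (by norm_num) ξ i)

@[simp] lemma ev_apply (i : K.Λ) (ξ : FockSpace K) : ev K i ξ = ξ i := rfl

lemma single_coord [DecidableEq K.Λ] (i j : K.Λ) :
    (lp.single 2 i (1 : ℂ) : FockSpace K) j = if j = i then 1 else 0 := by
  by_cases h : j = i
  · subst h; simp [lp.single_apply_self]
  · simp [lp.single_apply_ne 2 i _ h, h]

lemma hasSum_coord [DecidableEq K.Λ] (T : FockSpace K →L[ℂ] FockSpace K) (i : K.Λ) (ξ : FockSpace K) :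
    HasSum (fun m : K.Λ => ξ m * (T (lp.single 2 m 1)) i) ((T ξ) i) := by
  have h := (lp.hasSum_single (E := fun _ : K.Λ => ℂ) (p := 2) ENNReal.ofNat_ne_top ξ).mapL
    ((ev K i).comp T)
  have e : (fun m : K.Λ => ((ev K i).comp T) (lp.single 2 m (ξ m)))
      = fun m : K.Λ => ξ m * (T (lp.single 2 m 1)) i := by
    funext m
    have hs : (lp.single 2 m (ξ m) : FockSpace K) = ξ m • (lp.single 2 m (1 : ℂ)) := by
      rw [← lp.single_smul, smul_eq_mul, mul_one]
    rw [ContinuousLinearMap.comp_apply, hs, map_smul]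
    simp [smul_eq_mul]
  rw [e] at h
  exact h

theorem aux {r : ℕ} (K : KGraph r) [DecidableEq K.Λ]
    (L : K.Λ → FockSpace K →L[ℂ] FockSpace K) (hL : IsCreationFamily K L)
    (hmem : ∀ l : K.Λ, L l ∈ DiscAlgebra K L)
    (j : Fin r) (lam : K.Λ) (hdeg : K.deg lam = Pi.single j 1) :
    ∃ (a b : K.Λ), K.IsVertex a ∧ K.IsVertex b ∧
      ∃ (fa fb : ↑(WeakDual.characterSpace ℂ ↥(DiscAlgebra K L))),
        fa ⟨L a, hmem a⟩ = 1 ∧ (∀ l : K.Λ, l ≠ a → fa ⟨L l, hmem l⟩ = 0) ∧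
        fb ⟨L b, hmem b⟩ = 1 ∧ (∀ l : K.Λ, l ≠ b → fb ⟨L l, hmem l⟩ = 0) ∧
        ∃ δ : ↥(DiscAlgebra K L) →L[ℂ] ℂ,
          (∀ x y : ↥(DiscAlgebra K L), δ (x * y) = fa x * δ y + δ x * fb y) ∧
          ¬∃ c : ℂ, ∀ x : ↥(DiscAlgebra K L), δ x = fa x * c - c * fb x := by
  classical
  set a := K.tgt lam with ha_def
  set b := K.src lam with hb_def
  have hva : K.IsVertex a := K.deg_tgt lam
  have hvb : K.IsVertex b := K.deg_src lam
  have hdlam : K.deg lam ≠ 0 := by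
    rw [hdeg]
    intro h
    have := congrFun h j
    simp [Pi.single_apply] at this
  have hlam_ne_a : lam ≠ a := fun h => hdlam (by rw [h]; exact hva)
  have hlam_ne_b : lam ≠ b := fun h => hdlam (by rw [h]; exact hvb)
  -- key combinatorial fact at a vertex
  have keyV : ∀ l v m : K.Λ, K.IsVertex v →
      ((K.src l = K.tgt m ∧ K.comp l m = v) ↔ (l = v ∧ m = v)) := by
    intro l v m hv
    constructor
    · rintro ⟨h1, h2⟩
      have hd : K.deg l + K.deg m = 0 := by
        rw [← K.deg_comp l m h1, h2]; exact hv
      have hdl : K.deg l = 0 := by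
        funext k
        have := congrFun hd k
        simp only [Pi.add_apply, Pi.zero_apply] at this ⊢
        omega
      have hdm : K.deg m = 0 := by
        funext k
        have := congrFun hd k
        simp only [Pi.add_apply, Pi.zero_apply] at this ⊢
        omega
      have hl : K.src l = l := K.src_eq_self l hdl
      have hm : K.tgt m = m := K.tgt_eq_self m hdm
      have hlm : l = m := by rw [← hl, h1, hm]
      have hcm : K.comp l m = l := by
        have h3 := K.comp_src_self l
        rw [hl] at h3
        rw [← hlm]
        exact h3
      exact ⟨hcm.symm.trans h2, hlm.symm.trans (hcm.symm.trans h2)⟩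
    · rintro ⟨h1, h2⟩
      rw [h1, h2]
      refine ⟨by rw [K.src_eq_self v hv, K.tgt_eq_self v hv], ?_⟩
      have h3 := K.comp_src_self v
      rwa [K.src_eq_self v hv] at h3
  -- key combinatorial fact at `lam`
  have keyLam : ∀ l m : K.Λ,
      ((K.src l = K.tgt m ∧ K.comp l m = lam) ↔ ((l = a ∧ m = lam) ∨ (l = lam ∧ m = b))) := by
    intro l m
    constructor
    · rintro ⟨h1, h2⟩
      have hd : K.deg l + K.deg m = Pi.single j 1 := by
        rw [← K.deg_comp l m h1, h2, hdeg]
      by_cases hc : K.deg l j = 0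
      · left
        have hdl : K.deg l = 0 := by
          funext k
          have h4 := congrFun hd k
          simp only [Pi.add_apply, Pi.single_apply] at h4
          show K.deg l k = 0
          by_cases hk : k = j
          · subst hk; exact hc
          · simp only [if_neg hk] at h4; omega
        have hdm : K.deg m = Pi.single j 1 := by
          funext k
          have := congrFun hd k
          rw [Pi.add_apply, congrFun hdl k] at this
          simpa using this
        obtain ⟨p, -, hup⟩ := K.factorisation lam 0 (Pi.single j 1) (by rw [hdeg, zero_add])
        have h1' := hup (l, m) ⟨hdl, hdm, h1, h2⟩
        have h2' := hup (a, lam) ⟨hva, hdeg, (K.src_eq_self a hva).trans ha_def,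
          by rw [ha_def]; exact K.tgt_comp_self lam⟩
        have h3 := h1'.trans h2'.symm
        exact ⟨congrArg Prod.fst h3, congrArg Prod.snd h3⟩
      · right
        have hc1 : K.deg l j = 1 := by
          have := congrFun hd j
          simp [Pi.single_apply] at this
          omega
        have hdl : K.deg l = Pi.single j 1 := by
          funext k
          have h4 := congrFun hd k
          simp only [Pi.add_apply, Pi.single_apply] at h4
          rw [Pi.single_apply]
          by_cases hk : k = j
          · subst hk; simp only [if_pos rfl]; exact hc1
          · simp only [if_neg hk] at h4 ⊢; omega
        have hdm : K.deg m = 0 := by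
          funext k
          have := congrFun hd k
          rw [Pi.add_apply, congrFun hdl k] at this
          simp only [Pi.zero_apply]
          omega
        obtain ⟨p, -, hup⟩ := K.factorisation lam (Pi.single j 1) 0 (by rw [hdeg, add_zero])
        have h1' := hup (l, m) ⟨hdl, hdm, h1, h2⟩
        have h2' := hup (lam, b) ⟨hdeg, hvb, by rw [K.tgt_eq_self b hvb, hb_def],
          by rw [hb_def]; exact K.comp_src_self lam⟩
        have h3 := h1'.trans h2'.symm
        exact ⟨congrArg Prod.fst h3, congrArg Prod.snd h3⟩
    · rintro (⟨h1, h2⟩ | ⟨h1, h2⟩)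
      · rw [h1, h2, ha_def]
        exact ⟨K.src_eq_self _ (K.deg_tgt lam), K.tgt_comp_self lam⟩
      · rw [h1, h2, hb_def]
        exact ⟨(K.tgt_eq_self _ (K.deg_src lam)).symm, K.comp_src_self lam⟩
  -- coordinates of creation operators on basis vectors
  have hLsingle : ∀ l m i : K.Λ,
      (L l (lp.single 2 m 1)) i = if K.src l = K.tgt m ∧ K.comp l m = i then 1 else 0 := by
    intro l m i
    by_cases hsm : K.src l = K.tgt m
    · rw [(hL l m).1 hsm, single_coord]
      by_cases hc : K.comp l m = i
      · rw [if_pos hc.symm, if_pos ⟨hsm, hc⟩]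
      · rw [if_neg (fun h => hc h.symm), if_neg (fun h => hc h.2)]
    · rw [(hL l m).2 hsm, if_neg (fun h => hsm h.1)]
      simp [lp.coeFn_zero]
  -- vertex coordinates of creation operators
  have hLV : ∀ l v : K.Λ, K.IsVertex v → ∀ ξ : FockSpace K,
      (L l ξ) v = (if l = v then 1 else 0) * ξ v := by
    intro l v hv ξ
    have h := hasSum_coord K (L l) v ξ
    have e : (fun m : K.Λ => ξ m * (L l (lp.single 2 m 1)) v)
        = fun m : K.Λ => if m = v then (if l = v then 1 else 0) * ξ v else 0 := by
      funext m
      rw [hLsingle l m v, if_congr (keyV l v m hv) rfl rfl]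
      by_cases hm : m = v <;> by_cases hl : l = v <;> simp [hm, hl, mul_comm]
    rw [e] at h
    exact h.unique (hasSum_ite_eq v _)
  -- `lam` coordinate of creation operators
  have hLlam : ∀ l : K.Λ, ∀ ξ : FockSpace K,
      (L l ξ) lam = (if l = a then 1 else 0) * ξ lam + (if l = lam then 1 else 0) * ξ b := by
    intro l ξ
    have h := hasSum_coord K (L l) lam ξ
    by_cases hla : l = a
    · have hll : l ≠ lam := by rw [hla]; exact fun h' => hlam_ne_a h'.symm
      have e : (fun m : K.Λ => ξ m * (L l (lp.single 2 m 1)) lam)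
          = fun m : K.Λ => if m = lam then ξ lam else 0 := by
        funext m
        rw [hLsingle l m lam, if_congr (keyLam l m) rfl rfl]
        by_cases hm : m = lam <;> simp [hm, hla, hll, Ne.symm hlam_ne_a]
      rw [e] at h
      rw [h.unique (hasSum_ite_eq lam (ξ lam))]
      simp [hla, hll, Ne.symm hlam_ne_a]
    · by_cases hll : l = lam
      · have e : (fun m : K.Λ => ξ m * (L l (lp.single 2 m 1)) lam)
            = fun m : K.Λ => if m = b then ξ b else 0 := by
          funext m
          rw [hLsingle l m lam, if_congr (keyLam l m) rfl rfl]
          by_cases hm : m = b <;> simp [hm, hla, hll, hlam_ne_a]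
        rw [e] at h
        rw [h.unique (hasSum_ite_eq b (ξ b))]
        simp [hla, hll, hlam_ne_a]
      · have e : (fun m : K.Λ => ξ m * (L l (lp.single 2 m 1)) lam)
            = fun m : K.Λ => (0 : ℂ) := by
          funext m
          rw [hLsingle l m lam, if_congr (keyLam l m) rfl rfl]
          simp [hla, hll]
        rw [e] at h
        rw [h.unique hasSum_zero]
        simp [hla, hll]
  -- the closed subalgebra of operators with the right coordinate structure
  let S0 : Subalgebra ℂ (FockSpace K →L[ℂ] FockSpace K) :=
    { carrier := {T | (∀ v, K.IsVertex v → ∀ ξ : FockSpace K,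
          (T ξ) v = (T (lp.single 2 v 1)) v * ξ v) ∧
        (∀ ξ : FockSpace K, (T ξ) lam
          = (T (lp.single 2 a 1)) a * ξ lam + (T (lp.single 2 b 1)) lam * ξ b)}
      mul_mem' := by
        rintro T S ⟨hT1, hT2⟩ ⟨hS1, hS2⟩
        constructor
        · intro v hv ξ
          simp only [ContinuousLinearMap.mul_apply]
          rw [hT1 v hv (S ξ), hT1 v hv (S (lp.single 2 v 1)), hS1 v hv ξ]
          ring
        · intro ξ
          simp only [ContinuousLinearMap.mul_apply]
          rw [hT2 (S ξ), hT1 a hva (S (lp.single 2 a 1)), hT2 (S (lp.single 2 b 1)),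
            hS2 ξ, hS1 b hvb ξ]
          ring
      one_mem' := by
        constructor
        · intro v hv ξ
          simp only [ContinuousLinearMap.one_apply]
          rw [single_coord]
          simp
        · intro ξ
          simp only [ContinuousLinearMap.one_apply]
          rw [single_coord, single_coord]
          simp [hlam_ne_b]
      add_mem' := by
        rintro T S ⟨hT1, hT2⟩ ⟨hS1, hS2⟩
        constructor
        · intro v hv ξ
          simp only [ContinuousLinearMap.add_apply, lp.coeFn_add, Pi.add_apply]
          rw [hT1 v hv ξ, hS1 v hv ξ]
          ring
        · intro ξ
          simp only [ContinuousLinearMap.add_apply, lp.coeFn_add, Pi.add_apply]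
          rw [hT2 ξ, hS2 ξ]
          ring
      zero_mem' := by
        constructor
        · intro v hv ξ
          simp [lp.coeFn_zero]
        · intro ξ
          simp [lp.coeFn_zero]
      algebraMap_mem' := by
        intro c
        constructor
        · intro v hv ξ
          simp only [Algebra.algebraMap_eq_smul_one, ContinuousLinearMap.smul_apply,
            ContinuousLinearMap.one_apply, lp.coeFn_smul, Pi.smul_apply, smul_eq_mul]
          rw [single_coord]
          simp
        · intro ξ
          simp only [Algebra.algebraMap_eq_smul_one, ContinuousLinearMap.smul_apply,
            ContinuousLinearMap.one_apply, lp.coeFn_smul, Pi.smul_apply, smul_eq_mul]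
          rw [single_coord, single_coord]
          simp [hlam_ne_b] }
  have contc : ∀ (i : K.Λ) (ζ : FockSpace K),
      Continuous fun T : FockSpace K →L[ℂ] FockSpace K => (T ζ) i := fun i ζ =>
    (ev K i).continuous.comp (ContinuousLinearMap.apply ℂ (FockSpace K) ζ).continuous
  have hclosed : IsClosed (S0 : Set (FockSpace K →L[ℂ] FockSpace K)) := by
    have heq : (S0 : Set (FockSpace K →L[ℂ] FockSpace K))
        = (⋂ (v : K.Λ) (_ : K.IsVertex v) (ξ : FockSpace K),
            {T : FockSpace K →L[ℂ] FockSpace K | (T ξ) v = (T (lp.single 2 v 1)) v * ξ v}) ∩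
          ⋂ (ξ : FockSpace K), {T : FockSpace K →L[ℂ] FockSpace K | (T ξ) lam
            = (T (lp.single 2 a 1)) a * ξ lam + (T (lp.single 2 b 1)) lam * ξ b} := by
      ext T
      simp only [SetLike.mem_coe, Set.mem_inter_iff, Set.mem_iInter, Set.mem_setOf_eq]
      rfl
    rw [heq]
    exact IsClosed.inter
      (isClosed_iInter fun v => isClosed_iInter fun hv => isClosed_iInter fun ξ =>
        isClosed_eq (contc v ξ) ((contc v _).mul continuous_const))
      (isClosed_iInter fun ξ => isClosed_eq (contc lam ξ)
        (((contc a _).mul continuous_const).add ((contc lam _).mul continuous_const)))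
  have hgen : Set.range L ⊆ (S0 : Set (FockSpace K →L[ℂ] FockSpace K)) := by
    rintro T ⟨l, rfl⟩
    constructor
    · intro v hv ξ
      rw [hLV l v hv ξ, hLV l v hv (lp.single 2 v 1), single_coord]
      simp
    · intro ξ
      rw [hLlam l ξ, hLV l a hva (lp.single 2 a 1), hLlam l (lp.single 2 b 1),
        single_coord K a a, single_coord K b lam, single_coord K b b]
      simp [hlam_ne_b]
  have hsub : DiscAlgebra K L ≤ S0 :=
    Subalgebra.topologicalClosure_minimal (Algebra.adjoin_le hgen) hclosed
  -- bounded linear functionals given by matrix coefficients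
  have mkpsi : ∀ (m i : K.Λ), ∃ ψ : ↥(DiscAlgebra K L) →L[ℂ] ℂ,
      ∀ x : ↥(DiscAlgebra K L),
        ψ x = ((x : FockSpace K →L[ℂ] FockSpace K) (lp.single 2 m 1)) i := by
    intro m i
    refine ⟨LinearMap.mkContinuous
      { toFun := fun x : ↥(DiscAlgebra K L) =>
          ((x : FockSpace K →L[ℂ] FockSpace K) (lp.single 2 m 1)) i
        map_add' := fun x y => by
          simp [ContinuousLinearMap.add_apply, lp.coeFn_add]
        map_smul' := fun c x => by
          simp [ContinuousLinearMap.smul_apply, lp.coeFn_smul] }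
      ‖(lp.single 2 m (1 : ℂ) : FockSpace K)‖ (fun x => ?_), fun x => rfl⟩
    calc ‖((x : FockSpace K →L[ℂ] FockSpace K) (lp.single 2 m 1)) i‖
        ≤ ‖(x : FockSpace K →L[ℂ] FockSpace K) (lp.single 2 m 1)‖ :=
          lp.norm_apply_le_norm (by norm_num) _ i
      _ ≤ ‖(x : FockSpace K →L[ℂ] FockSpace K)‖ * ‖(lp.single 2 m (1 : ℂ) : FockSpace K)‖ :=
          (x : FockSpace K →L[ℂ] FockSpace K).le_opNorm _
      _ = ‖(lp.single 2 m (1 : ℂ) : FockSpace K)‖ * ‖x‖ := mul_comm _ _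
  obtain ⟨phia, hphia⟩ := mkpsi a a
  obtain ⟨phib, hphib⟩ := mkpsi b b
  obtain ⟨delta0, hdelta0⟩ := mkpsi b lam
  -- multiplicativity of the vertex functionals
  have hmula : ∀ x y : ↥(DiscAlgebra K L), phia (x * y) = phia x * phia y := by
    intro x y
    rw [hphia, hphia, hphia]
    have hc : ((x * y : ↥(DiscAlgebra K L)) : FockSpace K →L[ℂ] FockSpace K)
        = (x : FockSpace K →L[ℂ] FockSpace K) * (y : FockSpace K →L[ℂ] FockSpace K) := rfl
    rw [hc, ContinuousLinearMap.mul_apply]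
    exact (hsub x.2).1 a hva ((y : FockSpace K →L[ℂ] FockSpace K) (lp.single 2 a 1))
  have hmulb : ∀ x y : ↥(DiscAlgebra K L), phib (x * y) = phib x * phib y := by
    intro x y
    rw [hphib, hphib, hphib]
    have hc : ((x * y : ↥(DiscAlgebra K L)) : FockSpace K →L[ℂ] FockSpace K)
        = (x : FockSpace K →L[ℂ] FockSpace K) * (y : FockSpace K →L[ℂ] FockSpace K) := rfl
    rw [hc, ContinuousLinearMap.mul_apply]
    exact (hsub x.2).1 b hvb ((y : FockSpace K →L[ℂ] FockSpace K) (lp.single 2 b 1))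
  have hone_a : phia 1 = 1 := by
    rw [hphia]
    have hc : ((1 : ↥(DiscAlgebra K L)) : FockSpace K →L[ℂ] FockSpace K) = 1 := rfl
    rw [hc, ContinuousLinearMap.one_apply, single_coord]
    simp
  have hone_b : phib 1 = 1 := by
    rw [hphib]
    have hc : ((1 : ↥(DiscAlgebra K L)) : FockSpace K →L[ℂ] FockSpace K) = 1 := rfl
    rw [hc, ContinuousLinearMap.one_apply, single_coord]
    simp
  have hnea : phia ≠ 0 := fun h0 => by rw [h0] at hone_a; simp at hone_a
  have hneb : phib ≠ 0 := fun h0 => by rw [h0] at hone_b; simp at hone_b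
  -- assemble the characters
  refine ⟨a, b, hva, hvb, ⟨phia, hnea, hmula⟩, ⟨phib, hneb, hmulb⟩, ?_, ?_, ?_, ?_,
    delta0, ?_, ?_⟩
  · show phia ⟨L a, hmem a⟩ = 1
    rw [hphia]
    have hc : ((⟨L a, hmem a⟩ : ↥(DiscAlgebra K L)) : FockSpace K →L[ℂ] FockSpace K)
        = L a := rfl
    rw [hc, hLV a a hva, single_coord]
    simp
  · intro l hl
    show phia ⟨L l, hmem l⟩ = 0
    rw [hphia]
    have hc : ((⟨L l, hmem l⟩ : ↥(DiscAlgebra K L)) : FockSpace K →L[ℂ] FockSpace K)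
        = L l := rfl
    rw [hc, hLV l a hva]
    simp [hl]
  · show phib ⟨L b, hmem b⟩ = 1
    rw [hphib]
    have hc : ((⟨L b, hmem b⟩ : ↥(DiscAlgebra K L)) : FockSpace K →L[ℂ] FockSpace K)
        = L b := rfl
    rw [hc, hLV b b hvb, single_coord]
    simp
  · intro l hl
    show phib ⟨L l, hmem l⟩ = 0
    rw [hphib]
    have hc : ((⟨L l, hmem l⟩ : ↥(DiscAlgebra K L)) : FockSpace K →L[ℂ] FockSpace K)
        = L l := rfl
    rw [hc, hLV l b hvb]
    simp [hl]
  · -- the derivation identity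
    intro x y
    show delta0 (x * y) = phia x * delta0 y + delta0 x * phib y
    rw [hdelta0, hphia, hdelta0, hdelta0, hphib]
    have hc : ((x * y : ↥(DiscAlgebra K L)) : FockSpace K →L[ℂ] FockSpace K)
        = (x : FockSpace K →L[ℂ] FockSpace K) * (y : FockSpace K →L[ℂ] FockSpace K) := rfl
    rw [hc, ContinuousLinearMap.mul_apply]
    exact (hsub x.2).2 ((y : FockSpace K →L[ℂ] FockSpace K) (lp.single 2 b 1))
  · -- the derivation is not inner
    rintro ⟨c, hc⟩
    have e1 : delta0 ⟨L lam, hmem lam⟩ = 1 := by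
      rw [hdelta0]
      have hc' : ((⟨L lam, hmem lam⟩ : ↥(DiscAlgebra K L)) : FockSpace K →L[ℂ] FockSpace K)
          = L lam := rfl
      rw [hc', hLlam lam (lp.single 2 b 1), single_coord K b lam, single_coord K b b]
      simp [hlam_ne_a, hlam_ne_b]
    have e2 : phia ⟨L lam, hmem lam⟩ = 0 := by
      rw [hphia]
      have hc' : ((⟨L lam, hmem lam⟩ : ↥(DiscAlgebra K L)) : FockSpace K →L[ℂ] FockSpace K)
          = L lam := rfl
      rw [hc', hLV lam a hva]
      simp [hlam_ne_a]
    have e3 : phib ⟨L lam, hmem lam⟩ = 0 := by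
      rw [hphib]
      have hc' : ((⟨L lam, hmem lam⟩ : ↥(DiscAlgebra K L)) : FockSpace K →L[ℂ] FockSpace K)
          = L lam := rfl
      rw [hc', hLV lam b hvb]
      simp [hlam_ne_b]
    have h1 : (1 : ℂ) = phia ⟨L lam, hmem lam⟩ * c - c * phib ⟨L lam, hmem lam⟩ := by
      rw [← e1]
      exact hc ⟨L lam, hmem lam⟩
    rw [e2, e3] at h1
    simp at h1

end DiscAlgebraNotAmenableProof

/-- For a nontrivial finitely aligned `Λ`, the algebra `A_Λ` admits a
bounded non-inner derivation into some bimodule `ℂ_{a,b}`; in particular `A_Λ` is not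
amenable. -/
theorem disc_algebra_not_amenable
    {r : ℕ} (K : KGraph r) [DecidableEq K.Λ] (hFA : K.FinitelyAligned)
    (hnontriv : ∃ l : K.Λ, K.deg l ≠ 0)
    (L : K.Λ → FockSpace K →L[ℂ] FockSpace K) (hL : IsCreationFamily K L)
    (hmem : ∀ l : K.Λ, L l ∈ DiscAlgebra K L) :
    ∃ (a b : K.Λ), K.IsVertex a ∧ K.IsVertex b ∧
      ∃ (fa fb : ↑(WeakDual.characterSpace ℂ ↥(DiscAlgebra K L))),
        fa ⟨L a, hmem a⟩ = 1 ∧ (∀ l : K.Λ, l ≠ a → fa ⟨L l, hmem l⟩ = 0) ∧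
        fb ⟨L b, hmem b⟩ = 1 ∧ (∀ l : K.Λ, l ≠ b → fb ⟨L l, hmem l⟩ = 0) ∧
        ∃ δ : ↥(DiscAlgebra K L) →L[ℂ] ℂ,
          (∀ x y : ↥(DiscAlgebra K L), δ (x * y) = fa x * δ y + δ x * fb y) ∧
          ¬∃ c : ℂ, ∀ x : ↥(DiscAlgebra K L), δ x = fa x * c - c * fb x := by
  obtain ⟨l0, hl0⟩ := hnontriv
  obtain ⟨j, hj⟩ : ∃ j : Fin r, K.deg l0 j ≠ 0 := by
    by_contra h
    push_neg at h
    exact hl0 (funext fun j => h j)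
  obtain ⟨p, ⟨hp1, -, -, -⟩, -⟩ :=
    K.factorisation l0 (Pi.single j 1) (K.deg l0 - Pi.single j 1) (by
      funext k
      simp only [Pi.add_apply, Pi.sub_apply, Pi.single_apply]
      by_cases hk : k = j
      · subst hk; simp only [eq_self_iff_true, if_true]; omega
      · simp only [if_neg hk]; omega)
  exact DiscAlgebraNotAmenableProof.aux K L hL hmem j p.1 hp1
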